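/- For a function f on the vertices (with f(o)=0 convention), the multiplication operator M_f is bounded on H_E with ‖M_f‖ ≤ b if and only if the function s_f(x,y) := (b² − f(x)·conj(f(y)))·⟨v_x, v_y⟩_E is positive semidefinite on X × X, where X = V \ {o}; i.e., for every finite F ⊆ X and coefficients ξ: F → ℂ, Σ_{x,y∈F} conj(ξ_x) ξ_y s_f(x,y) ≥ 0. -/

import Mathlib

open scoped InnerProductSpace ComplexOrder BigOperators Classical

/-- Dirac's rank-one operator `|a⟩⟨b| : u ↦ ⟪b,u⟫ • a`. -/
noncomputable def rankOne {H : Type*} [NormedAddCommGroup H] [InnerProductSpace ℂ H]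
    (a b : H) : H →L[ℂ] H := (innerSL ℂ b).smulRight a

section aux

variable {X H : Type*} [NormedAddCommGroup H] [InnerProductSpace ℂ H]

lemma sum_inner_eq (g : X → H) (F : Finset X) (ξ : X → ℂ) :
    ∑ x ∈ F, ∑ y ∈ F, starRingEnd ℂ (ξ x) * ξ y * ⟪g x, g y⟫_ℂ
      = ⟪∑ x ∈ F, ξ x • g x, ∑ y ∈ F, ξ y • g y⟫_ℂ := by
  rw [sum_inner]
  refine Finset.sum_congr rfl fun x _ => ?_
  rw [inner_sum]
  refine Finset.sum_congr rfl fun y _ => ?_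
  rw [inner_smul_left, inner_smul_right]
  ring

lemma main_identity (v : X → H) (f : X → ℂ) (b : ℝ) (F : Finset X) (ξ : X → ℂ) :
    ∑ x ∈ F, ∑ y ∈ F, starRingEnd ℂ (ξ x) * ξ y *
        (((b : ℂ) ^ 2 - f x * starRingEnd ℂ (f y)) * ⟪v x, v y⟫_ℂ)
      = ((b ^ 2 * ‖∑ x ∈ F, ξ x • v x‖ ^ 2
          - ‖∑ x ∈ F, ξ x • (starRingEnd ℂ (f x) • v x)‖ ^ 2 : ℝ) : ℂ) := by
  have expand : ∀ x y : X,
      starRingEnd ℂ (ξ x) * ξ y * (((b : ℂ) ^ 2 - f x * starRingEnd ℂ (f y)) * ⟪v x, v y⟫_ℂ)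
        = (b : ℂ) ^ 2 * (starRingEnd ℂ (ξ x) * ξ y * ⟪v x, v y⟫_ℂ)
          - starRingEnd ℂ (ξ x) * ξ y *
              ⟪starRingEnd ℂ (f x) • v x, starRingEnd ℂ (f y) • v y⟫_ℂ := by
    intro x y
    rw [inner_smul_left, inner_smul_right, Complex.conj_conj]
    ring
  have h1 := sum_inner_eq v F ξ
  have h2 := sum_inner_eq (fun x => starRingEnd ℂ (f x) • v x) F ξ
  simp only at h2
  simp only [expand, Finset.sum_sub_distrib, ← Finset.mul_sum]
  rw [h1, h2, inner_self_eq_norm_sq_to_K, inner_self_eq_norm_sq_to_K]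
  push_cast
  ring_nf
  try rfl

end aux

/-- `M_f` is bounded on `H_E` with `‖M_f‖ ≤ b` (i.e. there is a
bounded operator acting as multiplication by `f`, where multiplication by `f`
is expressed through the energy kernel: `⟪v_x, Mu⟫ = f(x)⟪v_x, u⟫`) iff
`s_f(x,y) = (b² − f(x)conj(f(y)))⟪v_x,v_y⟫` is positive semidefinite on `X×X`. -/
theorem stmt8 {X H : Type*} [NormedAddCommGroup H] [InnerProductSpace ℂ H] [CompleteSpace H]
    (v : X → H)
    (hdense : Dense (↑(Submodule.span ℂ (Set.range v)) : Set H))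
    (f : X → ℂ) (b : ℝ) (hb : 0 ≤ b) :
    (∃ M : H →L[ℂ] H, ‖M‖ ≤ b ∧ ∀ (u : H) (x : X), ⟪v x, M u⟫_ℂ = f x * ⟪v x, u⟫_ℂ) ↔
    (∀ (F : Finset X) (ξ : X → ℂ),
      0 ≤ ∑ x ∈ F, ∑ y ∈ F, starRingEnd ℂ (ξ x) * ξ y *
            (((b : ℂ) ^ 2 - f x * starRingEnd ℂ (f y)) * ⟪v x, v y⟫_ℂ)) := by
  constructor
  · rintro ⟨M, hM, hMf⟩ F ξ
    set A := ContinuousLinearMap.adjoint M with hA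
    have hAv : ∀ x, A (v x) = starRingEnd ℂ (f x) • v x := by
      intro x
      refine ext_inner_right ℂ fun u => ?_
      rw [hA, ContinuousLinearMap.adjoint_inner_left, hMf, inner_smul_left, Complex.conj_conj]
    set w := ∑ x ∈ F, ξ x • v x with hw
    have hw' : ∑ x ∈ F, ξ x • (starRingEnd ℂ (f x) • v x) = A w := by
      rw [hw, map_sum]
      simp [hAv]
    rw [main_identity v f b F ξ, hw', ← hw, Complex.zero_le_real]
    have hAn : ‖A w‖ ≤ b * ‖w‖ := by
      calc ‖A w‖ ≤ ‖A‖ * ‖w‖ := A.le_opNorm w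
        _ ≤ b * ‖w‖ := by
            have : ‖A‖ = ‖M‖ := LinearIsometryEquiv.norm_map _ M
            exact mul_le_mul_of_nonneg_right (this ▸ hM) (norm_nonneg w)
    nlinarith [norm_nonneg w, norm_nonneg (A w), mul_nonneg hb (norm_nonneg w)]
  · intro hpos
    set L := Finsupp.linearCombination ℂ (fun x => starRingEnd ℂ (f x) • v x) with hL
    set S := Finsupp.linearCombination ℂ v with hS
    have hSsum : ∀ ξ : X →₀ ℂ, S ξ = ∑ x ∈ ξ.support, ξ x • v x := fun ξ => rfl
    have hLsum : ∀ ξ : X →₀ ℂ, L ξ = ∑ x ∈ ξ.support, ξ x • (starRingEnd ℂ (f x) • v x) :=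
      fun ξ => rfl
    have key : ∀ ξ : X →₀ ℂ, ‖L ξ‖ ≤ b * ‖S ξ‖ := by
      intro ξ
      have h := hpos ξ.support ξ
      rw [main_identity v f b ξ.support ξ, Complex.zero_le_real, ← hSsum, ← hLsum,
        sub_nonneg] at h
      have h2 : ‖L ξ‖ ^ 2 ≤ (b * ‖S ξ‖) ^ 2 := by rw [mul_pow]; exact h
      exact le_of_pow_le_pow_left₀ two_ne_zero (mul_nonneg hb (norm_nonneg _)) h2
    have hker : LinearMap.ker S ≤ LinearMap.ker L := by
      intro ξ hξ
      have hk := key ξ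
      rw [LinearMap.mem_ker.1 hξ, norm_zero, mul_zero] at hk
      exact LinearMap.mem_ker.2 (norm_le_zero_iff.1 hk)
    set p := LinearMap.range S with hp
    set A0 : ((X →₀ ℂ) ⧸ LinearMap.ker S) →ₗ[ℂ] H := (LinearMap.ker S).liftQ L hker with hA0
    set A : p →ₗ[ℂ] H := A0 ∘ₗ (S.quotKerEquivRange.symm : p →ₗ[ℂ] _) with hAdef
    have hAS : ∀ (ξ : X →₀ ℂ) (hmem : S ξ ∈ p), A ⟨S ξ, hmem⟩ = L ξ := by
      intro ξ hmem
      have he : S.quotKerEquivRange (Submodule.Quotient.mk ξ) = ⟨S ξ, hmem⟩ :=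
        Subtype.ext (S.quotKerEquivRange_apply_mk ξ)
      rw [hAdef, LinearMap.comp_apply, ← he, LinearEquiv.coe_coe, LinearEquiv.symm_apply_apply,
        hA0, Submodule.liftQ_apply]
    have hAbound : ∀ w : p, ‖A w‖ ≤ b * ‖w‖ := by
      rintro ⟨w, hwmem⟩
      obtain ⟨ξ, rfl⟩ := hwmem
      rw [hAS ξ (LinearMap.mem_range_self S ξ)]
      exact key ξ
    set Ac : p →L[ℂ] H := LinearMap.mkContinuous A b hAbound with hAc
    have hrange : (p : Set H) = ↑(Submodule.span ℂ (Set.range v)) := by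
      rw [hp, hS, Finsupp.range_linearCombination]
    have hdr : DenseRange (p.subtypeL : p →L[ℂ] H) := by
      have : Set.range (p.subtypeL : p →L[ℂ] H) = (p : Set H) := Subtype.range_coe
      rw [DenseRange, this, hrange]
      exact hdense
    have hui : IsUniformInducing (p.subtypeL : p →L[ℂ] H) :=
      isometry_subtype_coe.isUniformInducing
    set T := Ac.extend p.subtypeL with hT
    have hTnorm : ‖T‖ ≤ b := by
      have h1 : ∀ x : p, ‖x‖ ≤ ((1 : NNReal) : ℝ) * ‖(p.subtypeL : p →L[ℂ] H) x‖ := by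
        intro x
        simp only [NNReal.coe_one, one_mul]
        exact le_of_eq rfl
      have h2 := Ac.opNorm_extend_le hdr h1
      have h3 : ‖Ac‖ ≤ b := LinearMap.mkContinuous_norm_le A hb hAbound
      calc ‖T‖ ≤ ((1 : NNReal) : ℝ) * ‖Ac‖ := h2
        _ = ‖Ac‖ := by simp
        _ ≤ b := h3
    have hTv : ∀ x : X, T (v x) = starRingEnd ℂ (f x) • v x := by
      intro x
      have hSx : S (Finsupp.single x 1) = v x := by
        rw [hS, Finsupp.linearCombination_single, one_smul]
      have hmem : v x ∈ p := hSx ▸ LinearMap.mem_range_self S (Finsupp.single x 1)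
      have h1 : T (v x) = Ac ⟨v x, hmem⟩ :=
        ContinuousLinearMap.extend_eq Ac hdr hui ⟨v x, hmem⟩
      have h2 : Ac ⟨v x, hmem⟩ = A ⟨v x, hmem⟩ := rfl
      have h3 : (⟨v x, hmem⟩ : p) = ⟨S (Finsupp.single x 1),
          LinearMap.mem_range_self S (Finsupp.single x 1)⟩ := Subtype.ext hSx.symm
      rw [h1, h2, h3, hAS]
      rw [hL, Finsupp.linearCombination_single, one_smul]
    refine ⟨ContinuousLinearMap.adjoint T, ?_, ?_⟩
    · calc ‖ContinuousLinearMap.adjoint T‖ = ‖T‖ := LinearIsometryEquiv.norm_map _ T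
        _ ≤ b := hTnorm
    · intro u x
      rw [ContinuousLinearMap.adjoint_inner_right, hTv, inner_smul_left, Complex.conj_conj]
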